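/- For |x| < 1, the series ∑_{n=1}^∞ ζ(2n+1)·x^{2n+1}/(2n+1) equals -γx + (1/2)[log Γ(1-x) - log Γ(1+x)]. -/

import Mathlib

open Real Filter Finset Topology

open Real Filter

lemma aux_artanh {y : ℝ} (hy : |y| < 1) :
    HasSum (fun n : ℕ => y ^ (2 * (n + 1) + 1) / (2 * (n + 1) + 1))
      ((Real.log (1 + y) - Real.log (1 - y)) / 2 - y) := by
  have h := (hasSum_log_sub_log_of_abs_lt_one hy).div_const 2
  have h2 : HasSum (fun k : ℕ => y ^ (2 * k + 1) / (2 * k + 1))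
      ((Real.log (1 + y) - Real.log (1 - y)) / 2) := by
    refine h.congr_fun fun k => ?_
    field_simp
  have h3 := (hasSum_nat_add_iff (f := fun k : ℕ => y ^ (2 * k + 1) / (2 * k + 1))
    (g := (Real.log (1 + y) - Real.log (1 - y)) / 2 - y) 1).mpr ?_
  · refine h3.congr_fun fun n => ?_
    push_cast
    ring_nf
  · convert h2 using 1
    rfl
    simp


lemma aux_psummable (n : ℕ) : Summable (fun j : ℕ => 1 / ((j : ℝ) + 1) ^ (n + 2)) := by
  have := (Real.summable_one_div_nat_pow (p := n + 2)).mpr (by omega)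
  have h2 := (summable_nat_add_iff 1).mpr this
  refine h2.congr fun j => ?_
  push_cast
  ring

lemma aux_psummable' (n : ℕ) : Summable (fun j : ℕ => 1 / ((j : ℝ) + 1) ^ (2 * (n + 1) + 1)) := by
  have := aux_psummable (2 * n + 1)
  refine this.congr fun j => ?_
  norm_num
  congr 1

lemma aux_row (x : ℝ) (n : ℕ) : HasSum (fun j : ℕ => (x / (j + 1)) ^ (2 * (n + 1) + 1) / (2 * (n + 1) + 1))
    ((∑' j : ℕ, 1 / ((j : ℝ) + 1) ^ (2 * (n + 1) + 1)) * x ^ (2 * (n + 1) + 1)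
        / (2 * (n + 1) + 1)) := by
  have h2 := ((aux_psummable' n).hasSum.mul_right (x ^ (2 * (n + 1) + 1))).div_const
    (2 * (n + 1) + 1)
  refine h2.congr_fun fun j => ?_
  rw [div_pow]
  have : ((j : ℝ) + 1) ^ (2 * (n + 1) + 1) ≠ 0 := by positivity
  field_simp


set_option maxHeartbeats 1000000 in
lemma aux_summF {x : ℝ} (hx : |x| < 1) :
    Summable (fun p : ℕ × ℕ => (x / (p.2 + 1)) ^ (2 * (p.1 + 1) + 1) / (2 * (p.1 + 1) + 1)) := by
  have hgeo : Summable (fun n : ℕ => |x| ^ (2 * (n + 1) + 1)) := by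
    have h1 : |x| ^ 2 < 1 := by
      have := abs_nonneg x
      nlinarith
    have := (summable_geometric_of_lt_one (by positivity) h1).mul_right (|x| ^ 3)
    refine this.congr fun n => ?_
    rw [← pow_mul, ← pow_add]
    congr 1
  have hp : Summable (fun j : ℕ => (1 / ((j : ℝ) + 1)) ^ 2) := by
    have := (Real.summable_one_div_nat_pow (p := 2)).mpr one_lt_two
    have h2 := (summable_nat_add_iff 1).mpr this
    refine h2.congr fun j => ?_
    push_cast
    rw [div_pow]
    norm_num
  have hmaj : Summable (fun p : ℕ × ℕ => |x| ^ (2 * (p.1 + 1) + 1) * (1 / ((p.2 : ℝ) + 1)) ^ 2) :=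
    hgeo.mul_of_nonneg hp (fun n => by positivity) (fun j => by positivity)
  refine Summable.of_norm_bounded hmaj fun p => ?_
  obtain ⟨n, j⟩ := p
  rw [norm_div, norm_pow]
  have hj : (0:ℝ) < (j : ℝ) + 1 := by positivity
  have hb : ‖x / ((j:ℝ) + 1)‖ = |x| * (1 / ((j:ℝ) + 1)) := by
    rw [Real.norm_eq_abs, abs_div, abs_of_pos hj]
    ring
  calc ‖x / ((j:ℝ) + 1)‖ ^ (2 * (n + 1) + 1) / ‖(2 * ((n:ℝ) + 1) + 1)‖
      ≤ ‖x / ((j:ℝ) + 1)‖ ^ (2 * (n + 1) + 1) := by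
        apply div_le_self (by positivity)
        rw [Real.norm_eq_abs, abs_of_pos (by positivity)]
        linarith [Nat.cast_nonneg (α := ℝ) n]
    _ = |x| ^ (2 * (n + 1) + 1) * (1 / ((j:ℝ) + 1)) ^ (2 * (n + 1) + 1) := by
        rw [hb, mul_pow]
    _ ≤ |x| ^ (2 * (n + 1) + 1) * (1 / ((j:ℝ) + 1)) ^ 2 := by
        apply mul_le_mul_of_nonneg_left _ (by positivity)
        apply pow_le_pow_of_le_one (by positivity) _ (by omega)
        rw [div_le_one hj]
        linarith [Nat.cast_nonneg (α := ℝ) j]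


lemma aux_logGammaSeq {s : ℝ} (hs : 0 < s) {n : ℕ} (hn : 1 ≤ n) :
    Real.log (Real.GammaSeq s n) =
      s * Real.log n + Real.log (Nat.factorial n : ℝ) - ∑ j ∈ range (n + 1), Real.log (s + j) := by
  have hnpos : (0:ℝ) < n := by exact_mod_cast hn
  have hprod : (0:ℝ) < ∏ j ∈ range (n + 1), (s + j) :=
    Finset.prod_pos fun j _ => by positivity
  rw [Real.GammaSeq, Real.log_div (by positivity) hprod.ne', Real.log_mul
    (Real.rpow_pos_of_pos hnpos s).ne' (by positivity), Real.log_rpow hnpos,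
    Real.log_prod fun j _ => by positivity]

lemma aux_key (x : ℝ) (hx : |x| < 1) {n : ℕ} (hn : 1 ≤ n) :
    ∑ j ∈ range (n + 1),
        ((Real.log (1 + x / (j + 1)) - Real.log (1 - x / (j + 1))) / 2 - x / (j + 1)) =
      (Real.log (Real.GammaSeq (1 - x) n) - Real.log (Real.GammaSeq (1 + x) n)) / 2 +
        (x * Real.log n - x * (harmonic (n + 1) : ℝ)) := by
  obtain ⟨hx1, hx2⟩ := abs_lt.mp hx
  have hterm : ∀ j : ℕ,
      Real.log (1 + x / (j + 1)) - Real.log (1 - x / (j + 1)) =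
        Real.log (1 + x + j) - Real.log (1 - x + j) := by
    intro j
    have hj : (0:ℝ) < (j:ℝ) + 1 := by positivity
    have e1 : 1 + x + (j:ℝ) = ((j:ℝ) + 1) * (1 + x / (j + 1)) := by field_simp; ring
    have e2 : 1 - x + (j:ℝ) = ((j:ℝ) + 1) * (1 - x / (j + 1)) := by field_simp; ring
    have p1 : (0:ℝ) < 1 + x / (j + 1) := by
      have : -1 < x / ((j:ℝ)+1) := by
        rw [lt_div_iff₀ hj]; nlinarith [Nat.cast_nonneg (α := ℝ) j]
      linarith
    have p2 : (0:ℝ) < 1 - x / (j + 1) := by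
      have : x / ((j:ℝ)+1) < 1 := by
        rw [div_lt_iff₀ hj]; nlinarith [Nat.cast_nonneg (α := ℝ) j]
      linarith
    rw [e1, e2, Real.log_mul hj.ne' p1.ne', Real.log_mul hj.ne' p2.ne']
    ring
  have hharm : (harmonic (n + 1) : ℝ) = ∑ j ∈ range (n + 1), 1 / ((j:ℝ) + 1) := by
    rw [harmonic]
    push_cast
    simp [one_div]
  have hsum1 := aux_logGammaSeq (show (0:ℝ) < 1 + x by linarith) hn
  have hsum2 := aux_logGammaSeq (show (0:ℝ) < 1 - x by linarith) hn
  have e3 : ∑ j ∈ range (n + 1), Real.log (1 + x + j) =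
      (1 + x) * Real.log n + Real.log (Nat.factorial n : ℝ) - Real.log (Real.GammaSeq (1 + x) n) := by
    rw [hsum1]; ring
  have e4 : ∑ j ∈ range (n + 1), Real.log (1 - x + j) =
      (1 - x) * Real.log n + Real.log (Nat.factorial n : ℝ) - Real.log (Real.GammaSeq (1 - x) n) := by
    rw [hsum2]; ring
  calc ∑ j ∈ range (n + 1),
        ((Real.log (1 + x / (j + 1)) - Real.log (1 - x / (j + 1))) / 2 - x / (j + 1))
      = (∑ j ∈ range (n + 1), (Real.log (1 + x + j) - Real.log (1 - x + j))) / 2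
          - x * ∑ j ∈ range (n + 1), 1 / ((j:ℝ) + 1) := by
        have hc : ∀ j ∈ range (n + 1),
            ((Real.log (1 + x / (j + 1)) - Real.log (1 - x / (j + 1))) / 2 - x / (j + 1)) =
              (Real.log (1 + x + j) - Real.log (1 - x + j)) / 2 - x * (1 / ((j:ℝ) + 1)) := by
          intro j _
          rw [← hterm j]
          ring
        rw [Finset.sum_congr rfl hc, Finset.sum_sub_distrib, ← Finset.sum_div, ← Finset.mul_sum]
    _ = _ := by
        rw [Finset.sum_sub_distrib, e3, e4, ← hharm]
        ring


lemma aux_tendsto (x : ℝ) (hx : |x| < 1) :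
    Tendsto (fun N : ℕ => ∑ j ∈ range N,
        ((Real.log (1 + x / (j + 1)) - Real.log (1 - x / (j + 1))) / 2 - x / (j + 1))) atTop
      (𝓝 (-(Real.eulerMascheroniConstant * x) +
        (1 / 2) * (Real.log (Real.Gamma (1 - x)) - Real.log (Real.Gamma (1 + x))))) := by
  obtain ⟨hx1, hx2⟩ := abs_lt.mp hx
  rw [← tendsto_add_atTop_iff_nat 1]
  set γ := Real.eulerMascheroniConstant with hγ
  have t1 : Tendsto (fun n : ℕ => Real.log (Real.GammaSeq (1 - x) n)) atTop
      (𝓝 (Real.log (Real.Gamma (1 - x)))) :=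
    ((Real.continuousAt_log (Real.Gamma_pos_of_pos (by linarith : (0:ℝ) < 1 - x)).ne').tendsto).comp
      (Real.GammaSeq_tendsto_Gamma (1 - x))
  have t2 : Tendsto (fun n : ℕ => Real.log (Real.GammaSeq (1 + x) n)) atTop
      (𝓝 (Real.log (Real.Gamma (1 + x)))) :=
    ((Real.continuousAt_log (Real.Gamma_pos_of_pos (by linarith : (0:ℝ) < 1 + x)).ne').tendsto).comp
      (Real.GammaSeq_tendsto_Gamma (1 + x))
  have ta : Tendsto (fun n : ℕ => (harmonic (n + 1) : ℝ) - Real.log ((n:ℝ) + 1)) atTop (𝓝 γ) := by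
    have h := Real.tendsto_harmonic_sub_log.comp (tendsto_add_atTop_nat 1)
    refine h.congr fun n => ?_
    simp only [Function.comp_apply]
    push_cast
    ring
  have tb : Tendsto (fun n : ℕ => Real.log ((n:ℝ) + 1) - Real.log (n:ℝ)) atTop (𝓝 0) := by
    have h0 : Tendsto (fun n : ℕ => Real.log (1 + 1 / (n:ℝ))) atTop (𝓝 0) := by
      have ha : Tendsto (fun n : ℕ => 1 + 1 / (n:ℝ)) atTop (𝓝 (1 + 0)) :=
        tendsto_one_div_atTop_nhds_zero_nat.const_add (1:ℝ)
      rw [add_zero] at ha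
      simpa using ha.log one_ne_zero
    apply h0.congr'
    filter_upwards [eventually_gt_atTop 0] with n hn
    have hn' : (0:ℝ) < n := by exact_mod_cast hn
    rw [← Real.log_div (by positivity) hn'.ne']
    congr 1
    field_simp
  have t3 : Tendsto (fun n : ℕ => x * Real.log n - x * (harmonic (n + 1) : ℝ)) atTop
      (𝓝 (-(γ * x))) := by
    have h := ((ta.add tb).const_mul x).neg
    have h2 : -(x * (γ + 0)) = -(γ * x) := by ring
    rw [h2] at h
    refine h.congr fun n => ?_
    ring
  have tt := ((t1.sub t2).div_const 2).add t3
  have hval : (Real.log (Real.Gamma (1 - x)) - Real.log (Real.Gamma (1 + x))) / 2 + -(γ * x) =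
      -(γ * x) + (1 / 2) * (Real.log (Real.Gamma (1 - x)) - Real.log (Real.Gamma (1 + x))) := by
    ring
  rw [hval] at tt
  apply tt.congr'
  filter_upwards [eventually_ge_atTop 1] with n hn
  exact (aux_key x hx hn).symm

lemma real_main (x : ℝ) (hx : |x| < 1) :
    HasSum (fun n : ℕ =>
        (∑' j : ℕ, 1 / ((j : ℝ) + 1) ^ (2 * (n + 1) + 1)) * x ^ (2 * (n + 1) + 1)
          / (2 * (n + 1) + 1))
      (-(Real.eulerMascheroniConstant * x) +
        (1 / 2) * (Real.log (Real.Gamma (1 - x)) - Real.log (Real.Gamma (1 + x)))) := by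
  have hyj : ∀ j : ℕ, |x / ((j : ℝ) + 1)| < 1 := by
    intro j
    rw [abs_div, abs_of_pos (by positivity : (0:ℝ) < (j:ℝ) + 1), div_lt_one (by positivity)]
    calc |x| < 1 := hx
      _ ≤ (j : ℝ) + 1 := by linarith [Nat.cast_nonneg (α := ℝ) j]
  have hF := aux_summF hx
  have hcol : ∀ j : ℕ, HasSum
      (fun n : ℕ => (x / ((j:ℝ) + 1)) ^ (2 * (n + 1) + 1) / (2 * (n + 1) + 1))
      ((Real.log (1 + x / (j + 1)) - Real.log (1 - x / (j + 1))) / 2 - x / (j + 1)) :=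
    fun j => aux_artanh (hyj j)
  have hrows := hF.hasSum.prod_fiberwise (fun n => aux_row x n)
  have hg : HasSum (fun j : ℕ =>
      (Real.log (1 + x / (j + 1)) - Real.log (1 - x / (j + 1))) / 2 - x / (j + 1))
      (∑' p : ℕ × ℕ, (x / (p.2 + 1)) ^ (2 * (p.1 + 1) + 1) / (2 * (p.1 + 1) + 1)) := by
    have hswap := (Equiv.prodComm ℕ ℕ).hasSum_iff.mpr hF.hasSum
    exact hswap.prod_fiberwise fun j => hcol j
  have hgT : (∑' p : ℕ × ℕ, (x / (p.2 + 1)) ^ (2 * (p.1 + 1) + 1) / (2 * (p.1 + 1) + 1)) =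
      -(Real.eulerMascheroniConstant * x) +
        (1 / 2) * (Real.log (Real.Gamma (1 - x)) - Real.log (Real.Gamma (1 + x))) :=
    tendsto_nhds_unique hg.tendsto_sum_nat (aux_tendsto x hx)
  rw [hgT] at hrows
  exact hrows

theorem zeta_odd_sum (x : ℝ) (hx : |x| < 1) :
    HasSum (fun n : ℕ =>
        riemannZeta (2 * (n + 1) + 1) * (x : ℂ) ^ (2 * (n + 1) + 1) / (2 * (n + 1) + 1))
      (-(Real.eulerMascheroniConstant * x) +
        (1 / 2) * ((Real.log (Real.Gamma (1 - x)) : ℂ) - Real.log (Real.Gamma (1 + x)))) := by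
  have hr := (real_main x hx).mapL Complex.ofRealCLM
  have hz : ∀ n : ℕ, riemannZeta (2 * ((n : ℂ) + 1) + 1) =
      ((∑' j : ℕ, 1 / ((j : ℝ) + 1) ^ (2 * (n + 1) + 1) : ℝ) : ℂ) := by
    intro n
    have e : (2 * ((n : ℂ) + 1) + 1) = ((2 * (n + 1) + 1 : ℕ) : ℂ) := by push_cast; ring
    have hre : 1 < Complex.re ((2 * (n + 1) + 1 : ℕ) : ℂ) := by
      rw [Complex.natCast_re]
      exact_mod_cast (by omega : 1 < 2 * (n + 1) + 1)
    rw [e, zeta_eq_tsum_one_div_nat_add_one_cpow hre, Complex.ofReal_tsum]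
    refine tsum_congr fun j => ?_
    rw [Complex.cpow_natCast]
    push_cast
    norm_num
  have hTv : (-((Real.eulerMascheroniConstant : ℂ) * (x : ℂ)) +
      (1 / 2) * ((Real.log (Real.Gamma (1 - x)) : ℂ) - (Real.log (Real.Gamma (1 + x)) : ℂ))) =
      Complex.ofRealCLM (-(Real.eulerMascheroniConstant * x) +
        (1 / 2) * (Real.log (Real.Gamma (1 - x)) - Real.log (Real.Gamma (1 + x)))) := by
    simp only [Complex.ofRealCLM_apply]
    push_cast
    ring
  rw [hTv]
  refine hr.congr_fun fun n => ?_
  simp only [Complex.ofRealCLM_apply, hz n]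
  push_cast
  ring
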